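/- A nontrivial finite perfect group all of whose Sylow subgroups are cyclic is trivial; i.e., every finite group with all Sylow subgroups cyclic is solvable. -/

import Mathlib

open Subgroup

universe u

variable {G : Type u} [Group G] [Finite G]

set_option linter.unusedSectionVars false

lemma sylow_cyclic_subgroup (h : ∀ (p : ℕ) (_ : Fact p.Prime) (P : Sylow p G), IsCyclic P)
    (K : Subgroup G) (q : ℕ) (hq : Fact q.Prime) (Q : Sylow q K) : IsCyclic Q := by
  have hpQ : IsPGroup q ((Q : Subgroup K).map K.subtype) := Q.2.map K.subtype
  obtain ⟨R, hR⟩ := hpQ.exists_le_sylow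
  have : IsCyclic R := h q hq R
  have h1 : IsCyclic (((Q : Subgroup K).map K.subtype).subgroupOf R) := Subgroup.isCyclic _
  have h2 : IsCyclic ((Q : Subgroup K).map K.subtype) :=
    isCyclic_of_surjective _ (subgroupOfEquivOfLe hR).surjective
  exact isCyclic_of_surjective _
    ((Subgroup.equivMapOfInjective (Q : Subgroup K) K.subtype K.subtype_injective).symm).surjective


lemma norm_le_cent (p : ℕ) [hfp : Fact p.Prime]
    (hple : ∀ q : ℕ, q.Prime → q ∣ Nat.card G → p ≤ q) (hpdvd : p ∣ Nat.card G)
    (P : Sylow p G) (hcyc : IsCyclic P) :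
    Subgroup.normalizer (P : Set G) ≤ centralizer (P : Set G) := by
  have hpp := hfp.out
  haveI := hcyc
  have hPcomm : IsMulCommutative (P : Subgroup G) := by
    letI := hcyc.commGroup
    exact ⟨⟨fun a b => mul_comm a b⟩⟩
  set φ := (P : Subgroup G).normalizerMonoidHom with hφ
  have hcard : Nat.card P = p ^ (Nat.card G).factorization p := P.card_eq_multiplicity
  have hk : 0 < (Nat.card G).factorization p :=
    hpp.factorization_pos_of_dvd Nat.card_pos.ne' hpdvd
  set k := (Nat.card G).factorization p with hkdef
  set m := Nat.card φ.range with hm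
  have hmAut : m ∣ Nat.card (MulAut P) := Subgroup.card_subgroup_dvd_card φ.range
  have hAut : Nat.card (MulAut (P : Subgroup G)) = Nat.totient (p ^ k) := by
    rw [IsCyclic.card_mulAut, hcard]
  have hPker : (P : Subgroup G).subgroupOf (Subgroup.normalizer (P : Set G)) ≤ φ.ker := by
    rw [hφ, Subgroup.normalizerMonoidHom_ker]
    exact fun x hx => Subgroup.le_centralizer _ hx
  have hPN : (P : Subgroup G) ≤ Subgroup.normalizer (P : Set G) := Subgroup.le_normalizer
  have hcardPN :
      Nat.card ((P : Subgroup G).subgroupOf (Subgroup.normalizer (P : Set G))) = Nat.card P :=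
    Nat.card_congr (subgroupOfEquivOfLe hPN).toEquiv
  have hmul : m * Nat.card φ.ker = Nat.card (Subgroup.normalizer (P : Set G)) := by
    rw [hm, Nat.card_congr (QuotientGroup.quotientKerEquivRange φ).toEquiv.symm]
    exact (Subgroup.card_eq_card_quotient_mul_card_subgroup φ.ker).symm
  have hpk_ker : p ^ k ∣ Nat.card φ.ker := by
    rw [← hcard, ← hcardPN]; exact Subgroup.card_dvd_of_le hPker
  have hNG : Nat.card (Subgroup.normalizer (P : Set G)) ∣ Nat.card G :=
    Subgroup.card_subgroup_dvd_card _
  have hpm : ¬ p ∣ m := by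
    intro hdvd
    have hdv : p ^ (k + 1) ∣ Nat.card G := by
      refine dvd_trans ?_ hNG
      rw [← hmul, pow_succ, mul_comm (p ^ k) p]
      exact mul_dvd_mul hdvd hpk_ker
    rw [Nat.Prime.pow_dvd_iff_le_factorization hpp (Nat.card_pos).ne'] at hdv
    omega
  have hm1 : m = 1 := by
    by_contra hne
    have hm0 : m ≠ 0 := by
      intro h0; rw [h0] at hmul
      have := Nat.card_pos (α := (Subgroup.normalizer (P : Set G))); omega
    obtain ⟨q, hqp, hqd⟩ := Nat.exists_prime_and_dvd hne
    have hqG : q ∣ Nat.card G := hqd.trans (dvd_trans (⟨Nat.card φ.ker, hmul.symm⟩ : m ∣ Nat.card (Subgroup.normalizer (P : Set G))) hNG)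
    have hqge : p ≤ q := hple q hqp hqG
    have hqtot : q ∣ Nat.totient (p ^ k) := hqd.trans (hAut ▸ hmAut)
    rw [Nat.totient_prime_pow hpp hk] at hqtot
    rcases hqp.dvd_mul.mp hqtot with h1 | h2
    · have : q = p := (Nat.prime_dvd_prime_iff_eq hqp hpp).mp (hqp.dvd_of_dvd_pow h1)
      exact hpm (this ▸ hqd)
    · have h3 : q ≤ p - 1 := Nat.le_of_dvd (by have := hpp.two_le; omega) h2
      have := hpp.two_le
      omega
  intro g hg
  have hker : (⟨g, hg⟩ : Subgroup.normalizer (P : Set G)) ∈ φ.ker := by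
    have hb : φ.range = ⊥ := Subgroup.card_eq_one.mp hm1
    have hr : φ ⟨g, hg⟩ ∈ φ.range := ⟨_, rfl⟩
    rw [hb, Subgroup.mem_bot] at hr
    exact hr
  rw [hφ, Subgroup.normalizerMonoidHom_ker, mem_subgroupOf] at hker
  exact hker

lemma solvable_aux : ∀ (n : ℕ) (G : Type u) (_ : Group G) (_ : Finite G),
    Nat.card G ≤ n → (∀ (p : ℕ) (_ : Fact p.Prime) (P : Sylow p G), IsCyclic P) →
    IsSolvable G := by
  intro n
  induction n with
  | zero => intro G _ _ hle _; exact absurd (Nat.card_pos (α := G)) (by omega)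
  | succ n ih =>
    intro G _ _ hle h
    by_cases hG : Nat.card G ≤ 1
    · haveI : Subsingleton G := Finite.card_le_one_iff_subsingleton.mp hG
      exact (inferInstance : Group.IsSolvable G)
    push_neg at hG
    set p := (Nat.card G).minFac with hpdef
    have hpp : p.Prime := Nat.minFac_prime (by omega)
    haveI : Fact p.Prime := ⟨hpp⟩
    obtain ⟨P⟩ : Nonempty (Sylow p G) := inferInstance
    have hcyc : IsCyclic P := h p ‹_› P
    have hP : Subgroup.normalizer (P : Set G) ≤ centralizer (P : Set G) :=
      norm_le_cent p (fun q hq hd => Nat.minFac_le_of_dvd hq.two_le hd) (Nat.minFac_dvd _) P hcyc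
    set K := (MonoidHom.transferSylow P hP).ker with hK
    have hcomp : K.IsComplement' P := MonoidHom.ker_transferSylow_isComplement' P hP
    have hcardmul : Nat.card K * Nat.card P = Nat.card G := hcomp.card_mul
    have hcardP : Nat.card P = p ^ (Nat.card G).factorization p := P.card_eq_multiplicity
    have hk : 0 < (Nat.card G).factorization p :=
      hpp.factorization_pos_of_dvd Nat.card_pos.ne' (Nat.minFac_dvd _)
    have hP2 : 1 < Nat.card P := by
      rw [hcardP]
      calc 1 < p := hpp.one_lt
      _ ≤ p ^ (Nat.card G).factorization p := Nat.le_self_pow hk.ne' p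
    have hKlt : Nat.card K ≤ n := by
      have h1 : 0 < Nat.card K := Nat.card_pos
      nlinarith
    haveI hKs : Group.IsSolvable K :=
      ih K _ inferInstance hKlt (fun q hq Q => sylow_cyclic_subgroup h K q hq Q)
    haveI hPs : Group.IsSolvable (P : Subgroup G) :=
      isSolvable_of_comm (fun a b => by letI := hcyc.commGroup; exact mul_comm a b)
    exact solvable_of_ker_le_range K.subtype (MonoidHom.transferSylow P hP)
      (by rw [Subgroup.range_subtype])

theorem cyclic_sylow_solvable (H : Type*) [Group H] [Finite H]
    (h : ∀ (p : ℕ) (_ : Fact p.Prime) (P : Sylow p H), IsCyclic P) :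
    IsSolvable H ∧ (commutator H = ⊤ → Subsingleton H) := by
  have hsolv : IsSolvable H := solvable_aux (Nat.card H) H ‹_› ‹_› le_rfl h
  refine ⟨hsolv, fun hcomm => ?_⟩
  have hds : ∀ n, derivedSeries H n = ⊤ := by
    intro n
    induction n with
    | zero => rfl
    | succ n ihn => rw [derivedSeries_succ, ihn]; exact hcomm
  obtain ⟨n, hn⟩ := hsolv
  rw [hds n] at hn
  refine ⟨fun x y => ?_⟩
  have hx : x ∈ (⊥ : Subgroup H) := hn ▸ Subgroup.mem_top x
  have hy : y ∈ (⊥ : Subgroup H) := hn ▸ Subgroup.mem_top y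
  rw [Subgroup.mem_bot] at hx hy
  rw [hx, hy]
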